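/- (Topological core of Lemma 3: two intersection points can merge at a tangent point only if they are adjacent in the cyclic ordering.) Let a, c, b, d : [0,1] → ℝ be continuous functions such that a(t) < c(t) < b(t) < d(t) < a(t) + 2π for every t ∈ [0,1), so that for t < 1 the four points e^{i a(t)}, e^{i c(t)}, e^{i b(t)}, e^{i d(t)} are distinct points of the unit circle in this cyclic order, with the points of parameters c and d separating those of parameters a and b. If (cos a(1), sin a(1)) = (cos b(1), sin b(1)), i.e. the two non-adjacent points merge at t = 1, then (cos c(1), sin c(1)) = (cos a(1), sin a(1)) or (cos d(1), sin d(1)) = (cos a(1), sin a(1)); that is, one of the two separating points must merge with them as well. -/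

import Mathlib

open Real Set

/-- Limits from the left: a continuous function nonneg on `Ico 0 1` is nonneg at `1`. -/
lemma nonneg_at_one {g : ℝ → ℝ} (hg : ContinuousOn g (Set.Icc 0 1))
    (h : ∀ t ∈ Set.Ico (0 : ℝ) 1, 0 ≤ g t) : 0 ≤ g 1 := by
  have h1 : (1 : ℝ) ∈ Set.Icc (0 : ℝ) 1 := by norm_num
  have hcw : ContinuousWithinAt g (Set.Icc 0 1) 1 := hg 1 h1
  have hcw' : ContinuousWithinAt g (Set.Ico 0 1) 1 :=
    hcw.mono Set.Ico_subset_Icc_self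
  have hne : (nhdsWithin (1:ℝ) (Set.Ico 0 1)).NeBot := by
    refine mem_closure_iff_nhdsWithin_neBot.mp ?_
    rw [closure_Ico (by norm_num : (0:ℝ) ≠ 1)]
    exact h1
  exact ge_of_tendsto hcw' (Filter.eventually_iff_exists_mem.2
    ⟨Set.Ico 0 1, self_mem_nhdsWithin, h⟩)

/-- Two intersection points on the circle can merge only if they are adjacent in the cyclic
ordering: if four continuously moving points stay in cyclic order `a, c, b, d` for `t < 1`
and the two non-adjacent points `a`, `b` merge at `t = 1`, then one of the separating
points `c`, `d` merges with them as well. -/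
theorem stmt_2 (a c b d : ℝ → ℝ)
    (ha : ContinuousOn a (Set.Icc 0 1)) (hc : ContinuousOn c (Set.Icc 0 1))
    (hb : ContinuousOn b (Set.Icc 0 1)) (hd : ContinuousOn d (Set.Icc 0 1))
    (horder : ∀ t ∈ Set.Ico (0 : ℝ) 1,
      a t < c t ∧ c t < b t ∧ b t < d t ∧ d t < a t + 2 * Real.pi)
    (hmerge : (Real.cos (a 1), Real.sin (a 1)) = (Real.cos (b 1), Real.sin (b 1))) :
    (Real.cos (c 1), Real.sin (c 1)) = (Real.cos (a 1), Real.sin (a 1)) ∨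
      (Real.cos (d 1), Real.sin (d 1)) = (Real.cos (a 1), Real.sin (a 1)) := by
  have hac : a 1 ≤ c 1 := by
    have := nonneg_at_one (hc.sub ha) (fun t ht => sub_nonneg.2 (horder t ht).1.le)
    simpa [sub_nonneg] using this
  have hcb : c 1 ≤ b 1 := by
    have := nonneg_at_one (hb.sub hc) (fun t ht => sub_nonneg.2 (horder t ht).2.1.le)
    simpa [sub_nonneg] using this
  have hbd : b 1 ≤ d 1 := by
    have := nonneg_at_one (hd.sub hb) (fun t ht => sub_nonneg.2 (horder t ht).2.2.1.le)
    simpa [sub_nonneg] using this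
  have hda : d 1 ≤ a 1 + 2 * Real.pi := by
    have := nonneg_at_one ((ha.add continuousOn_const).sub hd)
      (fun t ht => sub_nonneg.2 (horder t ht).2.2.2.le)
    have := sub_nonneg.1 this
    simp only [Pi.add_apply] at this
    linarith
  obtain ⟨hcos, hsin⟩ := Prod.mk.injEq _ _ _ _ ▸ hmerge
  have hangle : (a 1 : Real.Angle) = (b 1 : ℝ) :=
    Real.Angle.cos_sin_inj hcos hsin
  obtain ⟨k, hk⟩ := Real.Angle.angle_eq_iff_two_pi_dvd_sub.1 hangle
  have hpi := Real.pi_pos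
  -- a 1 - b 1 = 2π k, with -2π ≤ a 1 - b 1 ≤ 0, so k = 0 or k = -1
  have hk0 : k = 0 ∨ k = -1 := by
    have h1 : (2 * Real.pi) * (k : ℝ) ≤ 0 := by rw [← hk]; linarith
    have h2 : (-1 : ℝ) ≤ (k : ℝ) := by
      nlinarith [hk]
    have h2' : (-1 : ℤ) ≤ k := by exact_mod_cast h2
    have h3 : (k : ℝ) ≤ 0 := by nlinarith
    have h3' : k ≤ 0 := by exact_mod_cast h3
    omega
  rcases hk0 with rfl | rfl
  · -- a 1 = b 1, hence c 1 = a 1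
    have hab : a 1 = b 1 := by
      have : a 1 - b 1 = 0 := by simpa using hk
      linarith
    have hca : c 1 = a 1 := le_antisymm (hab ▸ hcb) hac
    left; rw [hca]
  · -- b 1 = a 1 + 2π, hence d 1 = a 1 + 2π
    have hab : b 1 = a 1 + 2 * Real.pi := by
      have : a 1 - b 1 = -(2 * Real.pi) := by
        rw [hk]; push_cast; ring
      linarith
    have hdval : d 1 = a 1 + 2 * Real.pi := le_antisymm hda (hab ▸ hbd)
    right
    rw [hdval]
    simp [Real.cos_add, Real.sin_add, Real.cos_two_pi, Real.sin_two_pi]
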